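/- arXiv:1706.01297 — 3 statements merged into one kernel-verified Lean document; each statement's English description precedes it below -/
import Mathlib

section
/- Let n, m, p be positive integers with m ≥ 2p. A homogeneous polynomial u of degree m on ℂⁿ satisfies Δᵖu = 0 (i.e. u ∈ ℋ_m^p(ℂⁿ)) if and only if there exist uniquely determined harmonic homogeneous polynomials u_k ∈ ℋ_{m−2k}(ℂⁿ) of degree m−2k, for k = 0, 1, …, p−1, such that u(x) = Σ_{k=0}^{p−1} |x|^{2k} u_k(x) for all x ∈ ℂⁿ. If instead m < 2p, the same equivalence holds with the sum running over k = 0, 1, …, ⌊m/2⌋. -/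
open MeasureTheory Complex Filter Finset Metric
open scoped ENNReal Topology

noncomputable section

/-- `ℂⁿ` -/
abbrev Cn (n : ℕ) := Fin n → ℂ

/-- `ℝⁿ` with the euclidean norm -/
abbrev Rn (n : ℕ) := EuclideanSpace ℝ (Fin n)

/-- embedding of `ℝⁿ` into `ℂⁿ` -/
def toC {n : ℕ} (x : Rn n) : Cn n := fun j => (x j : ℂ)

/-- `|z|² = ∑ zⱼ²`, the complex-bilinear extension of the squared euclidean norm -/
def cnsq {n : ℕ} (z : Cn n) : ℂ := ∑ j, (z j) ^ 2

/-- the bilinear dot product `z ⬝ w = ∑ zⱼ wⱼ` -/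
def cdot {n : ℕ} (z w : Cn n) : ℂ := ∑ j, z j * w j

/-- componentwise complex conjugation -/
def conjC {n : ℕ} (z : Cn n) : Cn n := fun j => (starRingEnd ℂ) (z j)

/-- the hermitian norm `‖z‖ = (∑ |zⱼ|²)^(1/2)` on `ℂⁿ` -/
def hnorm {n : ℕ} (z : Cn n) : ℝ := Real.sqrt (∑ j, ‖z j‖ ^ 2)

/-- the principal square root `|z| = (∑ zⱼ²)^(1/2)`, complex extension of the euclidean norm -/
def cnorm {n : ℕ} (z : Cn n) : ℂ := cnsq z ^ ((1 : ℂ)/2)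

/-- `Ŝ_p = ⋃_{k<p} e^{kπi/p} S`, union of rotated unit spheres -/
def Shat (n p : ℕ) : Set (Cn n) :=
  {z | ∃ k < p, ∃ x : Rn n, ‖x‖ = 1 ∧ z = Complex.exp (k * Real.pi * Complex.I / p) • toC x}

/-- `B̂_p = ⋃_{k<p} e^{kπi/p} B`, union of rotated open unit balls -/
def Bhat (n p : ℕ) : Set (Cn n) :=
  {z | ∃ k < p, ∃ x : Rn n, ‖x‖ < 1 ∧ z = Complex.exp (k * Real.pi * Complex.I / p) • toC x}

/-- the complexified Laplacian on polynomials, `Δ = ∑ ∂²/∂xⱼ²` -/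
def lapP (n : ℕ) : MvPolynomial (Fin n) ℂ →ₗ[ℂ] MvPolynomial (Fin n) ℂ :=
  ∑ j : Fin n, ((MvPolynomial.pderiv j).toLinearMap ∘ₗ (MvPolynomial.pderiv j).toLinearMap)

/-- the polynomial `|x|² = ∑ xⱼ²` -/
def nsqPoly (n : ℕ) : MvPolynomial (Fin n) ℂ := ∑ j : Fin n, (MvPolynomial.X j) ^ 2

/-- `ℋ_m^p(ℂⁿ)`: homogeneous polynomials of degree `m` that are polyharmonic of order `p` -/
def Hmp (n m p : ℕ) : Submodule ℂ (MvPolynomial (Fin n) ℂ) :=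
  MvPolynomial.homogeneousSubmodule (Fin n) ℂ m ⊓ LinearMap.ker ((lapP n) ^ p)

/-- the normalised surface-area measure `σ` on the unit sphere `S ⊂ ℝⁿ` -/
def sphMeasure (n : ℕ) : Measure (sphere (0 : Rn n) 1) :=
  ((volume : Measure (Rn n)).toSphere Set.univ)⁻¹ • (volume : Measure (Rn n)).toSphere

/-- the inner product `⟨f,g⟩_{Ŝ_p} = (1/p) ∫_S ∑_j f(e^{jπi/p}ζ) conj(g(e^{jπi/p}ζ)) dσ(ζ)` -/
def innerShat (n p : ℕ) (f g : Cn n → ℂ) : ℂ :=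
  (p : ℂ)⁻¹ * ∫ ζ : sphere (0 : Rn n) 1, ∑ j ∈ Finset.range p,
      f (Complex.exp (j * Real.pi * Complex.I / p) • toC (ζ : Rn n)) *
        (starRingEnd ℂ) (g (Complex.exp (j * Real.pi * Complex.I / p) • toC (ζ : Rn n)))
    ∂(sphMeasure n)

/-- the measure on `ℂⁿ` representing `L²(Ŝ_p)`: the average of the `p` rotated copies of `σ` -/
def muShat (n p : ℕ) : Measure (Cn n) :=
  (p : ℝ≥0∞)⁻¹ • ∑ j ∈ Finset.range p,
    Measure.map (fun ζ : sphere (0 : Rn n) 1 =>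
      Complex.exp (j * Real.pi * Complex.I / p) • toC (ζ : Rn n)) (sphMeasure n)

/-- the Poisson kernel `P_p(x,ζ) = (1-|x|^{2p})/(x²ζ̄² - 2x⬝ζ̄ + 1)^{n/2}` for `B̂_p` -/
def PoissonK (n p : ℕ) (x ζ : Cn n) : ℂ :=
  (1 - (cnsq x) ^ p) / (cnsq x * cnsq (conjC ζ) - 2 * cdot x (conjC ζ) + 1) ^ ((n : ℂ)/2)

/-- the Poisson integral `P_p[f](x) = ⟨f, P_p(·,x)⟩_{Ŝ_p}` -/
def PInt (n p : ℕ) (f : Cn n → ℂ) (x : Cn n) : ℂ :=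
  innerShat n p f (fun ζ => PoissonK n p ζ x)

/-- the complexified Laplacian, through the real parametrisation of a rotated ball -/
def lapRe (n : ℕ) (g : Rn n → ℂ) : Rn n → ℂ := fun y =>
  ∑ j : Fin n, fderiv ℝ (fun z => fderiv ℝ g z (EuclideanSpace.single j 1)) y
    (EuclideanSpace.single j 1)

/-- the `L`-functional: `L(z) = sqrt(‖z‖² + sqrt(‖z‖⁴ - |z²|²))` -/
def Lnorm {n : ℕ} (z : Cn n) : ℝ :=
  Real.sqrt (hnorm z ^ 2 + Real.sqrt (hnorm z ^ 4 - ‖cnsq z‖ ^ 2))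

/-- the Lie ball `LB` -/
def LBall (n : ℕ) : Set (Cn n) := {z | Lnorm z < 1}

/-- the Lie sphere `LS` -/
def LSphere (n : ℕ) : Set (Cn n) :=
  {z | ∃ φ : ℝ, ∃ x : Rn n, ‖x‖ = 1 ∧ z = Complex.exp (φ * Complex.I) • toC x}

/-- the Cauchy-Hua kernel `H(z,w) = (w̄²z² - 2w̄⬝z + 1)^{-n/2}` -/
def Hua (n : ℕ) (z w : Cn n) : ℂ :=
  (cnsq (conjC w) * cnsq z - 2 * cdot (conjC w) z + 1) ^ (-(n : ℂ)/2)

/-- the Gegenbauer polynomial `C_m^λ(t)` -/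
def gegen (lam : ℂ) (m : ℕ) (t : ℂ) : ℂ :=
  ∑ k ∈ Finset.range (m / 2 + 1),
    (-1) ^ k * Complex.Gamma ((m : ℂ) + lam - k) /
      ((Nat.factorial k : ℂ) * (Nat.factorial (m - 2 * k) : ℂ) * Complex.Gamma lam) *
      (2 * t) ^ (m - 2 * k)

namespace AlmansiAux
open MvPolynomial

variable {n : ℕ}

lemma lapP_apply (f : MvPolynomial (Fin n) ℂ) :
    lapP n f = ∑ j : Fin n, pderiv j (pderiv j f) := by
  simp [lapP, LinearMap.sum_apply]

lemma degree_eq_sum (d : Fin n →₀ ℕ) : d.degree = ∑ j : Fin n, d j := by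
  rw [Finsupp.degree]
  exact Finset.sum_subset (Finset.subset_univ _)
    (fun x _ hx => Finsupp.notMem_support_iff.mp hx)

lemma degree_of_mem_support {u : MvPolynomial (Fin n) ℂ} {m : ℕ}
    (hu : u.IsHomogeneous m) {s : Fin n →₀ ℕ} (hs : s ∈ u.support) : s.degree = m := by
  by_contra h
  exact (MvPolynomial.mem_support_iff.mp hs) (hu.coeff_eq_zero h)

lemma sub_add_single {s : Fin n →₀ ℕ} {i : Fin n} (h : 0 < s i) :
    (s - Finsupp.single i 1) + Finsupp.single i 1 = s := by
  ext j
  rcases eq_or_ne j i with rfl | hj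
  · simp [Nat.sub_add_cancel h]
  · simp [Finsupp.single_apply, Ne.symm hj]

lemma isHomogeneous_pderiv {u : MvPolynomial (Fin n) ℂ} {m : ℕ} (hu : u.IsHomogeneous m)
    (i : Fin n) : (pderiv i u).IsHomogeneous (m - 1) := by
  conv_lhs => rw [← u.support_sum_monomial_coeff]
  rw [map_sum]
  refine IsHomogeneous.sum _ _ _ (fun s hs => ?_)
  rw [pderiv_monomial]
  rcases Nat.eq_zero_or_pos (s i) with h | h
  · simp [h, isHomogeneous_zero]
  · refine isHomogeneous_monomial _ ?_
    have h1 := sub_add_single (s := s) (i := i) h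
    have h2 : (s - Finsupp.single i 1).degree + 1 = m := by
      have h3 := congrArg Finsupp.degree h1
      rw [degree_eq_sum, degree_eq_sum] at h3
      simp only [Finsupp.add_apply] at h3
      rw [Finset.sum_add_distrib] at h3
      have h4 : ∑ j : Fin n, (Finsupp.single i 1 : Fin n →₀ ℕ) j = 1 := by
        simp [Finsupp.single_apply]
      rw [h4] at h3
      rw [← degree_of_mem_support hu hs, degree_eq_sum, degree_eq_sum, ← h3]
    omega

lemma isHomogeneous_lapP {u : MvPolynomial (Fin n) ℂ} {m : ℕ} (hu : u.IsHomogeneous m) :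
    (lapP n u).IsHomogeneous (m - 2) := by
  rw [lapP_apply]
  refine IsHomogeneous.sum _ _ _ (fun j _ => ?_)
  have := isHomogeneous_pderiv (isHomogeneous_pderiv hu j) j
  have h2 : m - 1 - 1 = m - 2 := by omega
  rwa [h2] at this

lemma euler {u : MvPolynomial (Fin n) ℂ} {m : ℕ} (hu : u.IsHomogeneous m) :
    ∑ j : Fin n, X j * pderiv j u = (m : ℂ) • u := by
  conv_lhs => rw [← u.support_sum_monomial_coeff]
  conv_rhs => rw [← u.support_sum_monomial_coeff]
  rw [Finset.smul_sum]
  simp_rw [map_sum, Finset.mul_sum]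
  rw [Finset.sum_comm]
  refine Finset.sum_congr rfl (fun s hs => ?_)
  ·
    have key : ∀ j : Fin n, X j * pderiv j (monomial s (coeff s u)) =
        ((s j : ℂ)) • monomial s (coeff s u) := by
      intro j
      rw [pderiv_monomial]
      rcases Nat.eq_zero_or_pos (s j) with h | h
      · simp [h]
      · rw [X, monomial_mul, one_mul, add_comm, sub_add_single h, smul_monomial,
          smul_eq_mul, mul_comm]
      -- may need fixing
    rw [Finset.sum_congr rfl (fun j _ => key j), ← Finset.sum_smul]
    congr 1
    rw [← Nat.cast_sum, ← degree_eq_sum, degree_of_mem_support hu hs]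


lemma pderiv_nsq (j : Fin n) : pderiv j (nsqPoly n) = 2 * X j := by
  rw [nsqPoly, map_sum]
  rw [Finset.sum_eq_single j (fun i _ hij => by
    rw [pderiv_pow, pderiv_X_of_ne hij]; ring) (fun h => absurd (Finset.mem_univ j) h)]
  rw [pderiv_pow, pderiv_X_self]
  ring

lemma nsq_isHomogeneous : (nsqPoly n).IsHomogeneous 2 :=
  IsHomogeneous.sum _ _ _ (fun j _ => isHomogeneous_X_pow j 2)

lemma lap_nsq_mul {w : MvPolynomial (Fin n) ℂ} {d : ℕ} (hw : w.IsHomogeneous d) :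
    lapP n (nsqPoly n * w) = ((2*n + 4*d : ℕ) : ℂ) • w + nsqPoly n * lapP n w := by
  rw [lapP_apply, lapP_apply]
  have e1 : ∀ j : Fin n, pderiv j (pderiv j (nsqPoly n * w)) =
      2 * w + 4 * (X j * pderiv j w) + nsqPoly n * pderiv j (pderiv j w) := by
    intro j
    have h2 : (pderiv j) (2 : MvPolynomial (Fin n) ℂ) = 0 := by
      rw [← map_ofNat (C : ℂ →+* MvPolynomial (Fin n) ℂ) 2, pderiv_C]
    rw [pderiv_mul, pderiv_nsq, map_add, pderiv_mul, pderiv_mul, pderiv_mul, pderiv_nsq, h2,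
      pderiv_X_self]
    ring
  rw [Finset.sum_congr rfl (fun j _ => e1 j), Finset.sum_add_distrib, Finset.sum_add_distrib,
    ← Finset.mul_sum, ← Finset.mul_sum, euler hw, Finset.sum_const, Finset.card_univ,
    Fintype.card_fin, smul_eq_C_mul, smul_eq_C_mul]
  push_cast
  rw [nsmul_eq_mul]
  rw [map_add, map_mul, map_mul]
  push_cast [MvPolynomial.C_eq_coe_nat]
  ring_nf
  simp only [map_ofNat, Finset.mul_sum]


lemma coef_ne_zero (hn : 0 < n) (k a : ℕ) : (2*(k+1)*(n+a+2*k) : ℕ) ≠ 0 := by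
  have h1 : (2*(k+1) : ℕ) ≠ 0 := by omega
  have h2 : (n+a+2*k : ℕ) ≠ 0 := by omega
  exact mul_ne_zero h1 h2

lemma lap_pow_succ {h : MvPolynomial (Fin n) ℂ} {e : ℕ} (hh : h.IsHomogeneous e)
    (hharm : lapP n h = 0) (k : ℕ) :
    lapP n (nsqPoly n ^ (k+1) * h) =
      ((2*(k+1)*(n+2*e+2*k) : ℕ) : ℂ) • (nsqPoly n ^ k * h) := by
  induction k with
  | zero =>
    rw [pow_one, lap_nsq_mul hh, hharm, mul_zero, add_zero, pow_zero, one_mul]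
    congr 1
    push_cast
    ring
  | succ k IH =>
    have hw : (nsqPoly n ^ (k+1) * h).IsHomogeneous (2*(k+1)+e) :=
      (nsq_isHomogeneous.pow (k+1)).mul hh
    have hr : nsqPoly n ^ (k+1+1) * h = nsqPoly n * (nsqPoly n ^ (k+1) * h) := by ring
    rw [hr, lap_nsq_mul hw, IH, mul_smul_comm]
    have hr2 : nsqPoly n * (nsqPoly n ^ k * h) = nsqPoly n ^ (k+1) * h := by ring
    rw [hr2, ← add_smul]
    congr 1
    push_cast
    ring

lemma lap_pow_p_le (hn : 0 < n) {h : MvPolynomial (Fin n) ℂ} {e : ℕ} (hh : h.IsHomogeneous e)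
    (hharm : lapP n h = 0) : ∀ p k, p ≤ k →
    ∃ C : ℕ, C ≠ 0 ∧ (lapP n ^ p) (nsqPoly n ^ k * h) = (C : ℂ) • (nsqPoly n ^ (k-p) * h) := by
  intro p
  induction p with
  | zero => exact fun k _ => ⟨1, one_ne_zero, by simp⟩
  | succ p IH =>
    intro k hk
    obtain ⟨k', rfl⟩ : ∃ k', k = k'+1 := ⟨k-1, by omega⟩
    obtain ⟨C, hC, hval⟩ := IH k' (by omega)
    refine ⟨(2*(k'+1)*(n+2*e+2*k')) * C, mul_ne_zero (coef_ne_zero hn k' _) hC, ?_⟩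
    rw [pow_succ, Module.End.mul_apply, lap_pow_succ hh hharm k', _root_.map_smul, hval, smul_smul]
    have : k'+1-(p+1) = k'-p := by omega
    rw [this]
    congr 1
    push_cast
    ring

lemma lap_pow_lt (hn : 0 < n) {h : MvPolynomial (Fin n) ℂ} {e : ℕ} (hh : h.IsHomogeneous e)
    (hharm : lapP n h = 0) {k p : ℕ} (hk : k < p) :
    (lapP n ^ p) (nsqPoly n ^ k * h) = 0 := by
  have h1 : (lapP n ^ (k+1)) (nsqPoly n ^ k * h) = 0 := by
    obtain ⟨C, hC, hval⟩ := lap_pow_p_le hn hh hharm k k le_rfl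
    rw [Nat.sub_self, pow_zero, one_mul] at hval
    rw [pow_succ', Module.End.mul_apply, hval, _root_.map_smul, hharm, smul_zero]
  have hp : p = (p - (k+1)) + (k+1) := by omega
  rw [hp, pow_add, Module.End.mul_apply, h1, map_zero]

lemma pderiv_eq_zero_of_isHomogeneous_zero {q : MvPolynomial (Fin n) ℂ}
    (hq : q.IsHomogeneous 0) (j : Fin n) : pderiv j q = 0 := by
  conv_lhs => rw [← q.support_sum_monomial_coeff]
  rw [map_sum]
  refine Finset.sum_eq_zero (fun s hs => ?_)
  have h0 : s = 0 := (Finsupp.degree_eq_zero_iff s).mp (degree_of_mem_support hq hs)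
  rw [pderiv_monomial, h0]
  simp

lemma lap_eq_zero_of_le_one {u : MvPolynomial (Fin n) ℂ} {m : ℕ} (hu : u.IsHomogeneous m)
    (hm : m ≤ 1) : lapP n u = 0 := by
  rw [lapP_apply]
  refine Finset.sum_eq_zero (fun j _ => ?_)
  have h0 : (pderiv j u).IsHomogeneous 0 := by
    have := isHomogeneous_pderiv hu j
    have hm1 : m - 1 = 0 := by omega
    rwa [hm1] at this
  exact pderiv_eq_zero_of_isHomogeneous_zero h0 j

lemma indep (hn : 0 < n) : ∀ (K : ℕ) (h : ℕ → MvPolynomial (Fin n) ℂ) (e : ℕ → ℕ),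
    (∀ k, k ≤ K → (h k).IsHomogeneous (e k) ∧ lapP n (h k) = 0) →
    ∑ k ∈ Finset.range (K+1), nsqPoly n ^ k * h k = 0 →
    ∀ k, k ≤ K → h k = 0 := by
  intro K
  induction K with
  | zero =>
    intro h e _ hsum k hk
    interval_cases k
    simpa using hsum
  | succ K IH =>
    intro h e hcond hsum
    have hlap := congrArg (lapP n) hsum
    rw [map_zero, map_sum] at hlap
    rw [Finset.sum_range_succ'] at hlap
    have h0 : lapP n (nsqPoly n ^ 0 * h 0) = 0 := by
      rw [pow_zero, one_mul, (hcond 0 (by omega)).2]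
    rw [h0, add_zero] at hlap
    have hterm : ∀ k ∈ Finset.range (K+1), lapP n (nsqPoly n ^ (k+1) * h (k+1)) =
        nsqPoly n ^ k * (((2*(k+1)*(n+2*(e (k+1))+2*k) : ℕ) : ℂ) • h (k+1)) := by
      intro k hkm
      have hk' := Finset.mem_range.mp hkm
      rw [lap_pow_succ (hcond (k+1) (by omega)).1 (hcond (k+1) (by omega)).2 k, mul_smul_comm]
    rw [Finset.sum_congr rfl hterm] at hlap
    have hzero : ∀ k, k ≤ K →
        (((2*(k+1)*(n+2*(e (k+1))+2*k) : ℕ) : ℂ) • h (k+1)) = 0 := by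
      refine IH _ (fun k => e (k+1)) (fun k hk => ⟨?_, ?_⟩) hlap
      · rw [smul_eq_C_mul]
        exact ((hcond (k+1) (by omega)).1).C_mul _
      · rw [_root_.map_smul, (hcond (k+1) (by omega)).2, smul_zero]
    have hsucc : ∀ k, k ≤ K → h (k+1) = 0 := by
      intro k hk
      have := hzero k hk
      rcases smul_eq_zero.mp this with hc | hh
      · exfalso
        exact coef_ne_zero hn k _ (Nat.cast_eq_zero.mp hc)
      · exact hh
    have hh0 : h 0 = 0 := by
      rw [Finset.sum_range_succ'] at hsum
      rw [Finset.sum_eq_zero (fun k hk => by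
        rw [hsucc k (by exact Nat.lt_succ_iff.mp (Finset.mem_range.mp hk)), mul_zero])] at hsum
      simpa using hsum
    intro k hk
    rcases Nat.eq_zero_or_eq_succ_pred k with rfl | hks
    · exact hh0
    · rw [hks]
      exact hsucc _ (by omega)


lemma fischer (hn : 0 < n) (m : ℕ) : ∀ u : MvPolynomial (Fin n) ℂ, u.IsHomogeneous m →
    ∃ h : ℕ → MvPolynomial (Fin n) ℂ,
      (∀ k, (h k).IsHomogeneous (m - 2*k) ∧ lapP n (h k) = 0) ∧
      (∀ k, m < 2*k → h k = 0) ∧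
      u = ∑ k ∈ Finset.range (m/2+1), nsqPoly n ^ k * h k := by
  induction m using Nat.strong_induction_on with
  | _ m IH =>
  intro u hu
  rcases le_or_gt m 1 with hm | hm
  · refine ⟨fun k => if k = 0 then u else 0, fun k => ?_, fun k hk => ?_, ?_⟩
    · rcases eq_or_ne k 0 with rfl | hk0
      · refine ⟨by simpa using hu, ?_⟩
        simpa using lap_eq_zero_of_le_one hu hm
      · simp [hk0, isHomogeneous_zero]
    · have hne : k ≠ 0 := by omega
      simp [hne]
    · have hm2 : m / 2 = 0 := by omega
      simp [hm2]
  · have hw := isHomogeneous_lapP hu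
    obtain ⟨g, hg, hgz, hsum⟩ := IH (m-2) (by omega) _ hw
    set cc : ℕ → ℕ := fun k => 2*(k+1)*(n+2*((m-2) - 2*k)+2*k) with hcc
    have hgk : ∀ k, (((cc k : ℂ)⁻¹ • g k)).IsHomogeneous ((m-2) - 2*k) := by
      intro k
      rw [smul_eq_C_mul]
      exact ((hg k).1).C_mul _
    have hgkh : ∀ k, lapP n ((cc k : ℂ)⁻¹ • g k) = 0 := by
      intro k
      rw [_root_.map_smul, (hg k).2, smul_zero]
    have hccne : ∀ k, (cc k : ℂ) ≠ 0 := by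
      intro k
      exact_mod_cast Nat.cast_ne_zero.mpr (coef_ne_zero hn k _)
    set S : MvPolynomial (Fin n) ℂ :=
      ∑ k ∈ Finset.range ((m-2)/2+1), nsqPoly n ^ (k+1) * ((cc k : ℂ)⁻¹ • g k) with hS
    have hS_homog : S.IsHomogeneous m := by
      rw [hS]
      refine IsHomogeneous.sum _ _ _ (fun k hk => ?_)
      have hk' := Finset.mem_range.mp hk
      have := (nsq_isHomogeneous.pow (k+1)).mul (hgk k)
      have hdeg : 2*(k+1) + ((m-2) - 2*k) = m := by omega
      rwa [hdeg] at this
    have hSl : lapP n S = lapP n u := by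
      rw [hS, map_sum]
      have hterm : ∀ k ∈ Finset.range ((m-2)/2+1),
          lapP n (nsqPoly n ^ (k+1) * ((cc k : ℂ)⁻¹ • g k)) = nsqPoly n ^ k * g k := by
        intro k _
        rw [lap_pow_succ (hgk k) (hgkh k) k, mul_smul_comm, smul_smul,
          mul_inv_cancel₀ (hccne k), one_smul]
      rw [Finset.sum_congr rfl hterm, ← hsum]
    refine ⟨fun k => match k with
      | 0 => u - S
      | (j+1) => (cc j : ℂ)⁻¹ • g j, fun k => ?_, fun k hk => ?_, ?_⟩
    · match k with
      | 0 =>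
        refine ⟨by simpa using hu.sub hS_homog, ?_⟩
        show lapP n (u - S) = 0
        rw [map_sub, hSl, sub_self]
      | (j+1) =>
        refine ⟨?_, hgkh j⟩
        have := hgk j
        have hdeg : (m-2) - 2*j = m - 2*(j+1) := by omega
        rwa [hdeg] at this
    · match k with
      | 0 => omega
      | (j+1) =>
        show (cc j : ℂ)⁻¹ • g j = 0
        rw [hgz j (by omega), smul_zero]
    · have hdiv : m/2+1 = ((m-2)/2+1)+1 := by omega
      rw [hdiv, Finset.sum_range_succ']
      simp only [pow_zero, one_mul]
      show u = ∑ k ∈ Finset.range ((m-2)/2+1), nsqPoly n ^ (k+1) * ((cc k : ℂ)⁻¹ • g k) + (u - S)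
      rw [← hS]
      ring


lemma decomp_unique (hn : 0 < n) {N m : ℕ} (hN : 0 < N)
    (v v' : Fin N → MvPolynomial (Fin n) ℂ)
    (hv : ∀ k : Fin N, (v k).IsHomogeneous (m - 2*(k:ℕ)) ∧ lapP n (v k) = 0)
    (hv' : ∀ k : Fin N, (v' k).IsHomogeneous (m - 2*(k:ℕ)) ∧ lapP n (v' k) = 0)
    (hsum : ∑ k : Fin N, nsqPoly n ^ (k:ℕ) * v k = ∑ k : Fin N, nsqPoly n ^ (k:ℕ) * v' k) :
    v = v' := by
  set D : ℕ → MvPolynomial (Fin n) ℂ :=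
    fun k => if hk : k < N then v ⟨k,hk⟩ - v' ⟨k,hk⟩ else 0 with hD
  have hcond : ∀ k, k ≤ N-1 → (D k).IsHomogeneous (m - 2*k) ∧ lapP n (D k) = 0 := by
    intro k hk
    have hkN : k < N := by omega
    rw [hD]
    simp only [dif_pos hkN]
    exact ⟨(hv ⟨k,hkN⟩).1.sub (hv' ⟨k,hkN⟩).1,
      by rw [map_sub, (hv ⟨k,hkN⟩).2, (hv' ⟨k,hkN⟩).2, sub_self]⟩
  have hzero : ∑ k ∈ Finset.range ((N-1)+1), nsqPoly n ^ k * D k = 0 := by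
    have hr : (N-1)+1 = N := by omega
    rw [hr]
    have he : ∀ k ∈ Finset.range N, nsqPoly n ^ k * D k =
        (fun j => if hj : j < N then nsqPoly n ^ j * v ⟨j,hj⟩ else 0) k -
        (fun j => if hj : j < N then nsqPoly n ^ j * v' ⟨j,hj⟩ else 0) k := by
      intro k hk
      have hkN := Finset.mem_range.mp hk
      simp only [hD, dif_pos hkN]
      ring
    rw [Finset.sum_congr rfl he, Finset.sum_sub_distrib,
      ← Fin.sum_univ_eq_sum_range (fun j => if hj : j < N then nsqPoly n ^ j * v ⟨j,hj⟩ else 0) N,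
      ← Fin.sum_univ_eq_sum_range (fun j => if hj : j < N then nsqPoly n ^ j * v' ⟨j,hj⟩ else 0) N]
    have hv1 : ∀ k : Fin N, (if hj : (k:ℕ) < N then nsqPoly n ^ (k:ℕ) * v ⟨k,hj⟩ else 0)
        = nsqPoly n ^ (k:ℕ) * v k := fun k => by rw [dif_pos k.isLt]
    have hv2 : ∀ k : Fin N, (if hj : (k:ℕ) < N then nsqPoly n ^ (k:ℕ) * v' ⟨k,hj⟩ else 0)
        = nsqPoly n ^ (k:ℕ) * v' k := fun k => by rw [dif_pos k.isLt]
    rw [Finset.sum_congr rfl (fun k _ => hv1 k), Finset.sum_congr rfl (fun k _ => hv2 k), hsum,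
      sub_self]
  have := indep hn (N-1) D (fun k => m - 2*k) hcond hzero
  funext k
  have hk := this k (by omega)
  rw [hD] at hk
  simp only [dif_pos k.isLt] at hk
  have := sub_eq_zero.mp hk
  simpa using this


theorem almansi_main (n m p : ℕ) (hn : 0 < n) (hm : 0 < m) (hp : 0 < p)
    (u : MvPolynomial (Fin n) ℂ) (hu : u.IsHomogeneous m) :
    (2 * p ≤ m →
      ((lapP n ^ p) u = 0 ↔
        ∃! v : Fin p → MvPolynomial (Fin n) ℂ,
          (∀ k : Fin p, (v k).IsHomogeneous (m - 2 * (k : ℕ)) ∧ lapP n (v k) = 0) ∧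
            u = ∑ k : Fin p, nsqPoly n ^ (k : ℕ) * v k)) ∧
    (m < 2 * p →
      ((lapP n ^ p) u = 0 ↔
        ∃! v : Fin (m / 2 + 1) → MvPolynomial (Fin n) ℂ,
          (∀ k : Fin (m / 2 + 1), (v k).IsHomogeneous (m - 2 * (k : ℕ)) ∧ lapP n (v k) = 0) ∧
            u = ∑ k : Fin (m / 2 + 1), nsqPoly n ^ (k : ℕ) * v k)) := by
  constructor
  · intro hm2p
    constructor
    · intro hU
      obtain ⟨h, hg, hgz, hsum⟩ := fischer hn m u hu
      rw [hsum, map_sum] at hU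
      rw [← Finset.sum_range_add_sum_Ico _ (show p ≤ m/2+1 by omega)] at hU
      have hz1 : ∑ k ∈ Finset.range p, (lapP n ^ p) (nsqPoly n ^ k * h k) = 0 :=
        Finset.sum_eq_zero (fun k hk => lap_pow_lt hn (hg k).1 (hg k).2 (Finset.mem_range.mp hk))
      rw [hz1, zero_add, Finset.sum_Ico_eq_sum_range] at hU
      choose C hC hval using fun j : ℕ =>
        lap_pow_p_le hn (hg (p+j)).1 (hg (p+j)).2 p (p+j) (by omega)
      have hterm : ∀ j ∈ Finset.range (m/2+1-p), (lapP n ^ p) (nsqPoly n ^ (p+j) * h (p+j)) =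
          nsqPoly n ^ j * ((C j : ℂ) • h (p+j)) := by
        intro j _
        rw [hval j, Nat.add_sub_cancel_left]
        exact (mul_smul_comm _ _ _).symm
      rw [Finset.sum_congr rfl hterm] at hU
      have hrN : m/2+1-p = (m/2+1-p-1)+1 := by omega
      rw [hrN] at hU
      have hzero := indep hn (m/2+1-p-1) (fun j => (C j : ℂ) • h (p+j)) (fun j => m - 2*(p+j))
        (fun j _ => by
          refine ⟨?_, ?_⟩
          · show (((C j : ℕ) : ℂ) • h (p+j)).IsHomogeneous (m - 2*(p+j))
            rw [smul_eq_C_mul]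
            exact ((hg (p+j)).1).C_mul _
          · show lapP n (((C j : ℕ) : ℂ) • h (p+j)) = 0
            rw [_root_.map_smul, (hg (p+j)).2, smul_zero]) hU
      have hvanish : ∀ k, p ≤ k → h k = 0 := by
        intro k hpk
        rcases le_or_gt k (m/2) with hkm | hkm
        · have hz : ((C (k-p) : ℕ) : ℂ) • h (p + (k-p)) = 0 := hzero (k-p) (by omega)
          have hj : p + (k - p) = k := by omega
          rw [hj] at hz
          rcases smul_eq_zero.mp hz with hc | hh
          · exact absurd (Nat.cast_eq_zero.mp hc) (hC (k-p))
          · exact hh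
        · exact hgz k (by omega)
      have husum : u = ∑ k ∈ Finset.range p, nsqPoly n ^ k * h k := by
        rw [hsum]
        refine (Finset.sum_subset (Finset.range_subset_range.mpr (by omega))
          (fun k hk hnk => ?_)).symm
        have h1 := Finset.mem_range.mp hk
        have h2 : ¬ k < p := fun hc => hnk (Finset.mem_range.mpr hc)
        rw [hvanish k (by omega), mul_zero]
      refine ⟨fun k : Fin p => h k, ⟨fun k => hg k, ?_⟩, ?_⟩
      · rw [Fin.sum_univ_eq_sum_range (fun k => nsqPoly n ^ k * h k) p]
        exact husum
      · intro y hy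
        refine decomp_unique hn hp y (fun k : Fin p => h (k:ℕ)) hy.1 (fun k => hg k) ?_
        rw [← hy.2, Fin.sum_univ_eq_sum_range (fun k => nsqPoly n ^ k * h k) p]
        exact husum
    · rintro ⟨v, ⟨hvc, hveq⟩, -⟩
      rw [hveq, map_sum]
      exact Finset.sum_eq_zero (fun k _ => lap_pow_lt hn (hvc k).1 (hvc k).2 k.isLt)
  · intro hm2p
    constructor
    · intro _
      obtain ⟨h, hg, hgz, hsum⟩ := fischer hn m u hu
      refine ⟨fun k : Fin (m/2+1) => h k, ⟨fun k => hg k, ?_⟩, ?_⟩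
      · rw [Fin.sum_univ_eq_sum_range (fun k => nsqPoly n ^ k * h k) (m/2+1)]
        exact hsum
      · intro y hy
        refine decomp_unique hn (by omega) y (fun k : Fin (m/2+1) => h (k:ℕ)) hy.1
          (fun k => hg k) ?_
        rw [← hy.2, Fin.sum_univ_eq_sum_range (fun k => nsqPoly n ^ k * h k) (m/2+1)]
        exact hsum
    · rintro ⟨v, ⟨hvc, hveq⟩, -⟩
      rw [hveq, map_sum]
      refine Finset.sum_eq_zero (fun k _ => lap_pow_lt hn (hvc k).1 (hvc k).2 ?_)
      have := k.isLt
      omega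

end AlmansiAux

/-- Almansi-type decomposition of homogeneous polyharmonic polynomials. -/
theorem almansi_homogeneous (n m p : ℕ) (hn : 0 < n) (hm : 0 < m) (hp : 0 < p)
    (u : MvPolynomial (Fin n) ℂ) (hu : u.IsHomogeneous m) :
    (2 * p ≤ m →
      ((lapP n ^ p) u = 0 ↔
        ∃! v : Fin p → MvPolynomial (Fin n) ℂ,
          (∀ k : Fin p, (v k).IsHomogeneous (m - 2 * (k : ℕ)) ∧ lapP n (v k) = 0) ∧
            u = ∑ k : Fin p, nsqPoly n ^ (k : ℕ) * v k)) ∧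
    (m < 2 * p →
      ((lapP n ^ p) u = 0 ↔
        ∃! v : Fin (m / 2 + 1) → MvPolynomial (Fin n) ℂ,
          (∀ k : Fin (m / 2 + 1), (v k).IsHomogeneous (m - 2 * (k : ℕ)) ∧ lapP n (v k) = 0) ∧
            u = ∑ k : Fin (m / 2 + 1), nsqPoly n ^ (k : ℕ) * v k)) := by
  exact AlmansiAux.almansi_main n m p hn hm hp u hu

end
end

section
/- Let n, m, p be positive integers and let q ∈ 𝒫_m(ℂⁿ) be a homogeneous polynomial of degree m on ℂⁿ. Then there exist uniquely determined polynomials q_{m−2kp} ∈ ℋ^p_{m−2kp}(ℂⁿ) (homogeneous of degree m−2kp and polyharmonic of order p), for k = 0, 1, …, ⌊m/(2p)⌋, such that q(x) = Σ_{k=0}^{⌊m/(2p)⌋} |x|^{2kp} q_{m−2kp}(x) for all x ∈ ℂⁿ. -/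
open MeasureTheory Complex Filter Finset Metric
open scoped ENNReal Topology

noncomputable section

namespace PolyDecomp

open MvPolynomial Finset

variable {n : ℕ}

/-- product of factorials of a multi-exponent -/
def wfact (α : Fin n →₀ ℕ) : ℕ := ∏ i, (α i).factorial

/-- the Fischer inner product on polynomials -/
def fB (f g : MvPolynomial (Fin n) ℂ) : ℂ :=
  ∑ α ∈ f.support, (wfact α : ℂ) * coeff α f * (starRingEnd ℂ) (coeff α g)

lemma fB_eq_sum {f g : MvPolynomial (Fin n) ℂ} {s : Finset (Fin n →₀ ℕ)}
    (hs : f.support ⊆ s) :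
    fB f g = ∑ α ∈ s, (wfact α : ℂ) * coeff α f * (starRingEnd ℂ) (coeff α g) := by
  rw [fB, Finset.sum_subset hs]
  intro x _ hx
  rw [MvPolynomial.notMem_support_iff.mp hx]
  ring

lemma fB_zero_left (g : MvPolynomial (Fin n) ℂ) : fB 0 g = 0 := by
  simp [fB]

lemma fB_add_left (f₁ f₂ g : MvPolynomial (Fin n) ℂ) :
    fB (f₁ + f₂) g = fB f₁ g + fB f₂ g := by
  rw [fB_eq_sum (s := f₁.support ∪ f₂.support) MvPolynomial.support_add,
    fB_eq_sum (f := f₁) (s := f₁.support ∪ f₂.support) subset_union_left,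
    fB_eq_sum (f := f₂) (s := f₁.support ∪ f₂.support) subset_union_right,
    ← Finset.sum_add_distrib]
  apply Finset.sum_congr rfl
  intro α _
  rw [coeff_add]
  ring

lemma fB_sub_left (f₁ f₂ g : MvPolynomial (Fin n) ℂ) :
    fB (f₁ - f₂) g = fB f₁ g - fB f₂ g := by
  have := fB_add_left (f₁ - f₂) f₂ g
  rw [sub_add_cancel] at this
  rw [this]; ring

lemma fB_sum_left {ι : Type*} (s : Finset ι) (F : ι → MvPolynomial (Fin n) ℂ)
    (g : MvPolynomial (Fin n) ℂ) :
    fB (∑ i ∈ s, F i) g = ∑ i ∈ s, fB (F i) g := by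
  induction s using Finset.cons_induction with
  | empty => simp [fB_zero_left]
  | cons a s' ha ih => rw [Finset.sum_cons, Finset.sum_cons, fB_add_left, ih]

lemma fB_sum_right {ι : Type*} (s : Finset ι) (f : MvPolynomial (Fin n) ℂ)
    (G : ι → MvPolynomial (Fin n) ℂ) :
    fB f (∑ i ∈ s, G i) = ∑ i ∈ s, fB f (G i) := by
  simp only [fB, MvPolynomial.coeff_sum, map_sum, Finset.mul_sum]
  exact Finset.sum_comm

lemma fB_monomial (v : Fin n →₀ ℕ) (b : ℂ) (g : MvPolynomial (Fin n) ℂ) :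
    fB (monomial v b) g = (wfact v : ℂ) * b * (starRingEnd ℂ) (coeff v g) := by
  rw [fB, MvPolynomial.support_monomial]
  split_ifs with h
  · simp [h]
  · rw [Finset.sum_singleton, MvPolynomial.coeff_monomial, if_pos rfl]

lemma wfact_sub_single {u : Fin n →₀ ℕ} {j : Fin n} (h : u j ≠ 0) :
    wfact (u - Finsupp.single j 1) * u j = wfact u := by
  obtain ⟨c, hc⟩ : ∃ c, u j = c + 1 := ⟨u j - 1, (Nat.succ_pred_eq_of_pos (Nat.pos_of_ne_zero h)).symm⟩
  rw [wfact, wfact, ← Finset.prod_erase_mul univ _ (mem_univ j),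
    ← Finset.prod_erase_mul univ _ (mem_univ j)]
  have h1 : ∀ i ∈ univ.erase j, (((u - Finsupp.single j 1) : Fin n →₀ ℕ) i).factorial = (u i).factorial := by
    intro i hi
    have : i ≠ j := (Finset.mem_erase.mp hi).1
    rw [Finsupp.tsub_apply, Finsupp.single_apply, if_neg (Ne.symm this)]
    simp
  rw [Finset.prod_congr rfl h1, mul_assoc]
  congr 1
  rw [Finsupp.tsub_apply, Finsupp.single_apply, if_pos rfl, hc]
  simp [Nat.factorial_succ]
  ring

lemma fB_pderiv (j : Fin n) (f g : MvPolynomial (Fin n) ℂ) :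
    fB (pderiv j f) g = fB f (X j * g) := by
  induction f using MvPolynomial.induction_on' with
  | add f₁ f₂ ih1 ih2 => rw [map_add, fB_add_left, fB_add_left, ih1, ih2]
  | monomial u a =>
    rw [pderiv_monomial, fB_monomial, fB_monomial]
    rw [mul_comm (X j) g, MvPolynomial.coeff_mul_X']
    by_cases h : j ∈ u.support
    · rw [if_pos h]
      have h' : u j ≠ 0 := Finsupp.mem_support_iff.mp h
      have := wfact_sub_single (u := u) (j := j) h'
      push_cast [← this]
      ring
    · rw [if_neg h]
      have h' : u j = 0 := Finsupp.notMem_support_iff.mp h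
      simp [h']


lemma lapP_apply (f : MvPolynomial (Fin n) ℂ) :
    lapP n f = ∑ j : Fin n, pderiv j (pderiv j f) := by
  simp [lapP, LinearMap.sum_apply, LinearMap.comp_apply]

lemma fB_lap (f g : MvPolynomial (Fin n) ℂ) :
    fB (lapP n f) g = fB f (nsqPoly n * g) := by
  rw [lapP_apply, fB_sum_left]
  have h1 : ∀ j : Fin n, fB (pderiv j (pderiv j f)) g = fB f (X j ^ 2 * g) := by
    intro j
    rw [fB_pderiv, fB_pderiv, pow_two, mul_assoc]
  rw [Finset.sum_congr rfl fun j _ => h1 j, ← fB_sum_right, nsqPoly, Finset.sum_mul]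

lemma fB_lap_pow (p : ℕ) (f g : MvPolynomial (Fin n) ℂ) :
    fB ((lapP n ^ p) f) g = fB f (nsqPoly n ^ p * g) := by
  induction p generalizing f g with
  | zero => simp
  | succ p ih =>
    rw [pow_succ', Module.End.mul_apply, fB_lap, ih]
    congr 1
    rw [← mul_assoc, ← pow_succ]

lemma fB_self_eq_zero {f : MvPolynomial (Fin n) ℂ} (h : fB f f = 0) : f = 0 := by
  have h2 : fB f f = ((∑ α ∈ f.support, (wfact α : ℝ) * Complex.normSq (coeff α f) : ℝ) : ℂ) := by
    rw [fB]
    push_cast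
    apply Finset.sum_congr rfl
    intro α _
    rw [mul_assoc, Complex.mul_conj]
  rw [h2] at h
  have h3 := Complex.ofReal_eq_zero.mp h
  by_contra hf
  have hs : f.support.Nonempty := MvPolynomial.support_nonempty.mpr hf
  obtain ⟨α, hα⟩ := hs
  have hpos : ∀ β ∈ f.support, (0:ℝ) ≤ (wfact β : ℝ) * Complex.normSq (coeff β f) := by
    intro β _
    exact mul_nonneg (by positivity) (Complex.normSq_nonneg _)
  have := (Finset.sum_eq_zero_iff_of_nonneg hpos).mp h3 α hα
  have hw : (0:ℝ) < (wfact α : ℝ) := by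
    have : 0 < wfact α := Finset.prod_pos fun i _ => Nat.factorial_pos _
    exact_mod_cast this
  have hc : coeff α f ≠ 0 := MvPolynomial.mem_support_iff.mp hα
  have : Complex.normSq (coeff α f) = 0 := by
    rcases mul_eq_zero.mp this with h' | h'
    · exact absurd h' (ne_of_gt hw)
    · exact h'
  exact hc (Complex.normSq_eq_zero.mp this)

lemma fB_orth {f g : MvPolynomial (Fin n) ℂ} {a b : ℕ}
    (hf : f.IsHomogeneous a) (hg : g.IsHomogeneous b) (hab : a ≠ b) : fB f g = 0 := by
  rw [fB]
  apply Finset.sum_eq_zero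
  intro α hα
  have hdeg : α.degree = a := by
    by_contra hcon
    exact (MvPolynomial.mem_support_iff.mp hα) (hf.coeff_eq_zero hcon)
  have : coeff α g = 0 := hg.coeff_eq_zero (by rw [hdeg]; exact hab)
  simp [this]

lemma degree_eq_sum (d : Fin n →₀ ℕ) : d.degree = ∑ i, d i := by
  rw [Finsupp.degree]
  apply Finset.sum_subset (Finset.subset_univ _)
  intro x _ hx
  exact Finsupp.notMem_support_iff.mp hx

lemma pderiv_homog {q : MvPolynomial (Fin n) ℂ} {m : ℕ} (hq : q.IsHomogeneous m) (j : Fin n) :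
    (pderiv j q).IsHomogeneous (m - 1) := by
  rw [← MvPolynomial.support_sum_monomial_coeff q, map_sum, ← mem_homogeneousSubmodule]
  apply Submodule.sum_mem
  intro d hd
  rw [mem_homogeneousSubmodule, pderiv_monomial]
  by_cases hdj : d j = 0
  · rw [hdj]
    push_cast
    rw [mul_zero]
    simp only [map_zero]
    exact isHomogeneous_zero _ _ _
  · apply isHomogeneous_monomial
    have hdm : d.degree = m := by
      by_contra hcon
      exact (MvPolynomial.mem_support_iff.mp hd) (hq.coeff_eq_zero hcon)
    have hle : Finsupp.single j 1 ≤ d := by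
      rw [Finsupp.single_le_iff]
      omega
    have hadd : (d - Finsupp.single j 1) + Finsupp.single j 1 = d := tsub_add_cancel_of_le hle
    have hdeg : (d - Finsupp.single j 1).degree + 1 = m := by
      rw [degree_eq_sum]
      have key : ∀ i, ((d - Finsupp.single j 1) : Fin n →₀ ℕ) i
          + (Finsupp.single j 1 : Fin n →₀ ℕ) i = d i := fun i => by
        rw [← Finsupp.add_apply, hadd]
      have hsing : ∑ i, (Finsupp.single j 1 : Fin n →₀ ℕ) i = 1 := by
        simp [Finsupp.single_apply]
      calc ∑ i, ((d - Finsupp.single j 1) : Fin n →₀ ℕ) i + 1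
          = ∑ i, (((d - Finsupp.single j 1) : Fin n →₀ ℕ) i
              + (Finsupp.single j 1 : Fin n →₀ ℕ) i) := by
            rw [Finset.sum_add_distrib, hsing]
        _ = ∑ i, d i := Finset.sum_congr rfl fun i _ => key i
        _ = m := by rw [← degree_eq_sum, hdm]
    omega


lemma lap_homog {q : MvPolynomial (Fin n) ℂ} {m : ℕ} (hq : q.IsHomogeneous m) :
    (lapP n q).IsHomogeneous (m - 2) := by
  rw [lapP_apply, ← mem_homogeneousSubmodule]
  apply Submodule.sum_mem
  intro j _
  rw [mem_homogeneousSubmodule]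
  have := pderiv_homog (pderiv_homog hq j) j
  rwa [show m - 1 - 1 = m - 2 by omega] at this

lemma lap_pow_homog {q : MvPolynomial (Fin n) ℂ} {m : ℕ} (p : ℕ) (hq : q.IsHomogeneous m) :
    (((lapP n) ^ p) q).IsHomogeneous (m - 2 * p) := by
  induction p with
  | zero => simpa using hq
  | succ p ih =>
    rw [pow_succ', Module.End.mul_apply]
    have := lap_homog ih
    rwa [show m - 2 * p - 2 = m - 2 * (p + 1) by omega] at this

lemma nsq_homog : (nsqPoly n).IsHomogeneous 2 := by
  rw [nsqPoly, ← mem_homogeneousSubmodule]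
  apply Submodule.sum_mem
  intro j _
  rw [mem_homogeneousSubmodule]
  have := (isHomogeneous_X ℂ j).pow 2
  simpa using this

lemma nsq_pow_homog (p : ℕ) : (nsqPoly n ^ p).IsHomogeneous (2 * p) :=
  nsq_homog.pow p

lemma nsq_ne_zero (hn : 0 < n) : nsqPoly n ≠ 0 := by
  intro h
  have h2 := congrArg (MvPolynomial.eval (fun _ => (1:ℂ))) h
  rw [nsqPoly] at h2
  simp only [map_sum, map_pow, MvPolynomial.eval_X, one_pow, map_zero,
    Finset.sum_const, Finset.card_univ, Fintype.card_fin, nsmul_eq_mul, mul_one] at h2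
  have : (n : ℂ) ≠ 0 := Nat.cast_ne_zero.mpr (Nat.pos_iff_ne_zero.mp hn)
  exact this h2

/-- the key operator `r ↦ Δ^p (|x|^{2p} r)` -/
def philm (n p : ℕ) : MvPolynomial (Fin n) ℂ →ₗ[ℂ] MvPolynomial (Fin n) ℂ :=
  ((lapP n) ^ p) ∘ₗ LinearMap.mulLeft ℂ (nsqPoly n ^ p)

lemma philm_apply (p : ℕ) (r : MvPolynomial (Fin n) ℂ) :
    philm n p r = ((lapP n) ^ p) (nsqPoly n ^ p * r) := by
  simp [philm, LinearMap.mulLeft_apply]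

lemma philm_inj (hn : 0 < n) (p : ℕ) : Function.Injective (philm n p) := by
  intro a b hab
  have h0 : philm n p (a - b) = 0 := by rw [map_sub, hab, sub_self]
  have h1 : fB (philm n p (a - b)) (a - b) = 0 := by rw [h0, fB_zero_left]
  rw [philm_apply, fB_lap_pow] at h1
  have h2 : nsqPoly n ^ p * (a - b) = 0 := fB_self_eq_zero h1
  have h3 : nsqPoly n ^ p ≠ 0 := pow_ne_zero p (nsq_ne_zero hn)
  have := mul_eq_zero.mp h2
  rcases this with h' | h'
  · exact absurd h' h3
  · exact sub_eq_zero.mp h'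

lemma exists_preimage (hn : 0 < n) (p d : ℕ) {g : MvPolynomial (Fin n) ℂ}
    (hg : g.IsHomogeneous d) :
    ∃ r : MvPolynomial (Fin n) ℂ, r.IsHomogeneous d ∧
      ((lapP n) ^ p) (nsqPoly n ^ p * r) = g := by
  set V := homogeneousSubmodule (Fin n) ℂ d with hV
  haveI : FiniteDimensional ℂ V := by
    apply Submodule.finiteDimensional_of_le (S₂ := restrictTotalDegree (Fin n) ℂ d)
    intro x hx
    rw [mem_restrictTotalDegree]
    exact ((mem_homogeneousSubmodule _ _).mp hx).totalDegree_le
  have hmaps : ∀ x ∈ V, philm n p x ∈ V := by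
    intro x hx
    rw [hV, mem_homogeneousSubmodule] at hx ⊢
    rw [philm_apply]
    have := lap_pow_homog p ((nsq_pow_homog p).mul hx)
    rwa [show 2 * p + d - 2 * p = d by omega] at this
  let T : V →ₗ[ℂ] V := (philm n p).restrict hmaps
  have hinj : Function.Injective T := by
    intro a b hab
    exact Subtype.ext (philm_inj hn p (congrArg Subtype.val hab))
  have hsurj : Function.Surjective T := LinearMap.injective_iff_surjective.mp hinj
  obtain ⟨r, hr⟩ := hsurj ⟨g, (mem_homogeneousSubmodule _ _).mpr hg⟩
  refine ⟨(r : MvPolynomial (Fin n) ℂ), (mem_homogeneousSubmodule _ _).mp r.2, ?_⟩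
  have := congrArg Subtype.val hr
  rw [← philm_apply]
  exact this


lemma sum_shift (p N : ℕ) (u : Fin (N + 1) → MvPolynomial (Fin n) ℂ) :
    ∑ k : Fin (N + 1), nsqPoly n ^ ((k : ℕ) * p) * u k
      = u 0 + nsqPoly n ^ p * ∑ i : Fin N, nsqPoly n ^ ((i : ℕ) * p) * u i.succ := by
  rw [Fin.sum_univ_succ]
  simp only [Fin.val_zero, zero_mul, pow_zero, one_mul, Fin.val_succ]
  congr 1
  rw [Finset.mul_sum]
  apply Finset.sum_congr rfl
  intro i _
  rw [show ((i : ℕ) + 1) * p = (i : ℕ) * p + p by ring, pow_add]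
  ring

theorem decomp (n p : ℕ) (hn : 0 < n) (hp : 0 < p) :
    ∀ m, ∀ q : MvPolynomial (Fin n) ℂ, q.IsHomogeneous m →
    ∃! v : Fin (m / (2 * p) + 1) → MvPolynomial (Fin n) ℂ,
      (∀ k : Fin (m / (2 * p) + 1), v k ∈ Hmp n (m - 2 * (k : ℕ) * p) p) ∧
        q = ∑ k : Fin (m / (2 * p) + 1), nsqPoly n ^ ((k : ℕ) * p) * v k := by
  intro m
  induction m using Nat.strong_induction_on with
  | _ m IH =>
  intro q hq
  by_cases hm2p : m < 2 * p
  · -- base case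
    have hK : m / (2 * p) = 0 := Nat.div_eq_of_lt hm2p
    have hzero : ((lapP n) ^ p) q = 0 := by
      apply fB_self_eq_zero
      have h1 : fB (((lapP n) ^ p) q) (((lapP n) ^ p) q)
          = fB q (nsqPoly n ^ p * ((lapP n) ^ p) q) := fB_lap_pow p _ _
      have h2 : fB q (nsqPoly n ^ p * ((lapP n) ^ p) q) = 0 := by
        apply fB_orth hq ((nsq_pow_homog p).mul (lap_pow_homog p hq))
        omega
      rw [h1, h2]
    have hsub : ∀ k : Fin (m / (2 * p) + 1), (k : ℕ) = 0 := by
      intro k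
      have := k.isLt
      omega
    refine ⟨fun _ => q, ⟨?_, ?_⟩, ?_⟩
    · intro k
      rw [show m - 2 * (k : ℕ) * p = m by rw [hsub k]; omega]
      exact Submodule.mem_inf.mpr ⟨(mem_homogeneousSubmodule _ _).mpr hq,
        LinearMap.mem_ker.mpr hzero⟩
    · have hcongr : ∀ k ∈ (Finset.univ : Finset (Fin (m / (2 * p) + 1))),
          nsqPoly n ^ ((k : ℕ) * p) * q = q := by
        intro k _
        rw [hsub k, zero_mul, pow_zero, one_mul]
      rw [Finset.sum_congr rfl hcongr, Finset.sum_const, Finset.card_univ,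
        Fintype.card_fin, hK]
      simp
    · rintro v' ⟨hv'm, hv's⟩
      funext k
      have huniv : (Finset.univ : Finset (Fin (m / (2 * p) + 1))) = {k} := by
        apply Finset.eq_singleton_iff_unique_mem.mpr
        exact ⟨Finset.mem_univ k, fun x _ => Fin.ext (by rw [hsub x, hsub k])⟩
      rw [huniv, Finset.sum_singleton, hsub k, zero_mul, pow_zero, one_mul] at hv's
      exact hv's.symm
  · -- inductive step
    push_neg at hm2p
    have h2p : 0 < 2 * p := by omega
    have hK : m / (2 * p) = (m - 2 * p) / (2 * p) + 1 := by
      conv_lhs => rw [← Nat.sub_add_cancel hm2p]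
      exact Nat.add_div_right _ h2p
    rw [hK]
    have hΔq : (((lapP n) ^ p) q).IsHomogeneous (m - 2 * p) := lap_pow_homog p hq
    obtain ⟨r, hr, hφr⟩ := exists_preimage hn p (m - 2 * p) hΔq
    set h := q - nsqPoly n ^ p * r with hh
    have hhm : h.IsHomogeneous m := by
      apply hq.sub
      have := (nsq_pow_homog p).mul hr
      rwa [show 2 * p + (m - 2 * p) = m by omega] at this
    have hhker : ((lapP n) ^ p) h = 0 := by rw [hh, map_sub, hφr, sub_self]
    obtain ⟨w, ⟨hwm, hws⟩, hwu⟩ := IH (m - 2 * p) (by omega) r hr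
    have hdeg : ∀ i : Fin ((m - 2 * p) / (2 * p) + 1),
        m - 2 * ((i : ℕ) + 1) * p = m - 2 * p - 2 * (i : ℕ) * p := by
      intro i
      rw [Nat.sub_sub, show 2 * p + 2 * (i : ℕ) * p = 2 * ((i : ℕ) + 1) * p by ring]
    refine ⟨Fin.cases h w, ⟨?_, ?_⟩, ?_⟩
    · intro k
      induction k using Fin.cases with
      | zero =>
        simp only [Fin.cases_zero, Fin.val_zero]
        rw [show m - 2 * 0 * p = m by omega]
        exact Submodule.mem_inf.mpr ⟨(mem_homogeneousSubmodule _ _).mpr hhm,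
          LinearMap.mem_ker.mpr hhker⟩
      | succ i =>
        simp only [Fin.cases_succ, Fin.val_succ]
        rw [hdeg i]
        exact hwm i
    · rw [sum_shift]
      simp only [Fin.cases_zero, Fin.cases_succ]
      rw [← hws, hh]
      ring
    · rintro v' ⟨hv'm, hv's⟩
      set w' : Fin ((m - 2 * p) / (2 * p) + 1) → MvPolynomial (Fin n) ℂ :=
        fun i => v' i.succ with hw'
      set r' : MvPolynomial (Fin n) ℂ :=
        ∑ i : Fin ((m - 2 * p) / (2 * p) + 1), nsqPoly n ^ ((i : ℕ) * p) * w' i with hr'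
      have hw'm : ∀ i : Fin ((m - 2 * p) / (2 * p) + 1),
          w' i ∈ Hmp n (m - 2 * p - 2 * (i : ℕ) * p) p := by
        intro i
        have := hv'm i.succ
        rwa [Fin.val_succ, hdeg i] at this
      have hr'm : r'.IsHomogeneous (m - 2 * p) := by
        rw [hr', ← mem_homogeneousSubmodule]
        apply Submodule.sum_mem
        intro i _
        rw [mem_homogeneousSubmodule]
        have hwi : (w' i).IsHomogeneous (m - 2 * p - 2 * (i : ℕ) * p) :=
          (mem_homogeneousSubmodule _ _).mp (Submodule.mem_inf.mp (hw'm i)).1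
        have hmul := (nsq_pow_homog ((i : ℕ) * p)).mul hwi
        have hbound : (i : ℕ) * (2 * p) ≤ m - 2 * p := by
          apply (Nat.le_div_iff_mul_le h2p).mp
          have := i.isLt
          omega
        have hb2 : 2 * ((i : ℕ) * p) ≤ m - 2 * p := by
          rw [show 2 * ((i : ℕ) * p) = (i : ℕ) * (2 * p) by ring]
          exact hbound
        have hc : 2 * (i : ℕ) * p = 2 * ((i : ℕ) * p) := by ring
        rwa [show 2 * ((i : ℕ) * p) + (m - 2 * p - 2 * (i : ℕ) * p) = m - 2 * p by omega]
          at hmul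
      have hqe : q = v' 0 + nsqPoly n ^ p * r' := by
        rw [hv's, sum_shift, hr']
      have hφr' : ((lapP n) ^ p) (nsqPoly n ^ p * r') = ((lapP n) ^ p) q := by
        have hker0 : ((lapP n) ^ p) (v' 0) = 0 :=
          LinearMap.mem_ker.mp (Submodule.mem_inf.mp (hv'm 0)).2
        rw [hqe, map_add, hker0, zero_add]
      have hrr : r' = r := by
        apply philm_inj hn p
        rw [philm_apply, philm_apply, hφr', hφr]
      have hv'0 : v' 0 = h := by
        rw [hh, hqe, hrr]
        ring
      have hw'w : w' = w := by
        apply hwu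
        exact ⟨hw'm, by rw [← hrr, hr']⟩
      funext k
      induction k using Fin.cases with
      | zero => simp only [Fin.cases_zero]; exact hv'0
      | succ i =>
        simp only [Fin.cases_succ]
        rw [← hw'w]

end PolyDecomp

/-- iterated decomposition of a homogeneous polynomial into polyharmonic pieces. -/
theorem poly_iterated_decomposition (n m p : ℕ) (hn : 0 < n) (hm : 0 < m) (hp : 0 < p)
    (q : MvPolynomial (Fin n) ℂ) (hq : q.IsHomogeneous m) :
    ∃! v : Fin (m / (2 * p) + 1) → MvPolynomial (Fin n) ℂ,
      (∀ k : Fin (m / (2 * p) + 1), v k ∈ Hmp n (m - 2 * (k : ℕ) * p) p) ∧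
        q = ∑ k : Fin (m / (2 * p) + 1), nsqPoly n ^ ((k : ℕ) * p) * v k := by
  exact PolyDecomp.decomp n p hn hp m q hq

end
end

section
/- Let n, m, p be positive integers. The space ℋ_m^p(ℂⁿ) of homogeneous polynomials of degree m on ℂⁿ that are polyharmonic of order p is finite dimensional, and dim ℋ_m^p(ℂⁿ) = C(n+m−1, n−1) if m < 2p, while dim ℋ_m^p(ℂⁿ) = C(n+m−1, n−1) − C(n+m−2p−1, n−1) if m ≥ 2p, where C(a,b) denotes the binomial coefficient. -/
open MeasureTheory Complex Filter Finset Metric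
open scoped ENNReal Topology

noncomputable section

section DimAux

open MvPolynomial Finsupp

lemma lapP_apply {n : ℕ} (f : MvPolynomial (Fin n) ℂ) :
    lapP n f = ∑ j : Fin n, pderiv j (pderiv j f) := by
  simp [lapP]

lemma degree_fin {n : ℕ} (d : Fin n →₀ ℕ) : d.degree = ∑ j : Fin n, d j :=
  Finset.sum_subset (Finset.subset_univ _)
    (fun i _ hi => Finsupp.notMem_support_iff.mp hi)

lemma degree_fin_add {n : ℕ} (a b : Fin n →₀ ℕ) :
    (a + b).degree = a.degree + b.degree := by
  simp [degree_fin, Finset.sum_add_distrib]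

lemma degree_fin_single {n : ℕ} (j : Fin n) (k : ℕ) :
    (Finsupp.single j k).degree = k := by
  simp [degree_fin, Finsupp.single_apply]

lemma isHom_pderiv {n m : ℕ} {f : MvPolynomial (Fin n) ℂ} (hf : f.IsHomogeneous m)
    (j : Fin n) : (pderiv j f).IsHomogeneous (m - 1) := by
  rw [f.as_sum, map_sum]
  apply IsHomogeneous.sum
  intro d hd
  rw [pderiv_monomial]
  rcases Nat.eq_zero_or_pos (d j) with h | h
  · rw [h]
    simp only [Nat.cast_zero, mul_zero, monomial_zero]
    exact isHomogeneous_zero _ _ _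
  · apply isHomogeneous_monomial
    have hdm : d.degree = m := by
      by_contra hne
      exact (MvPolynomial.mem_support_iff.mp hd) (hf.coeff_eq_zero hne)
    have h1 : (d - Finsupp.single j 1) + Finsupp.single j 1 = d :=
      tsub_add_cancel_of_le (Finsupp.single_le_iff.mpr h)
    have h2 := congrArg Finsupp.degree h1
    rw [degree_fin_add, degree_fin_single] at h2
    omega

lemma isHom_lap {n m : ℕ} {f : MvPolynomial (Fin n) ℂ} (hf : f.IsHomogeneous m) :
    (lapP n f).IsHomogeneous (m - 2) := by
  rw [lapP_apply]
  apply IsHomogeneous.sum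
  intro j _
  have := isHom_pderiv (isHom_pderiv hf j) j
  rwa [Nat.sub_sub] at this

lemma isHom_zero_eq_C {n : ℕ} {f : MvPolynomial (Fin n) ℂ} (hf : f.IsHomogeneous 0) :
    f = C (coeff 0 f) := by
  ext d
  rcases eq_or_ne d 0 with rfl | hd
  · simp
  · rw [hf.coeff_eq_zero (by simpa [Finsupp.degree_eq_zero_iff] using hd), coeff_C,
      if_neg (fun h => hd h.symm)]

lemma lap_eq_zero {n m : ℕ} {f : MvPolynomial (Fin n) ℂ} (hf : f.IsHomogeneous m)
    (hm : m < 2) : lapP n f = 0 := by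
  rw [lapP_apply]
  apply Finset.sum_eq_zero
  intro j _
  interval_cases m
  · rw [isHom_zero_eq_C hf]
    simp [pderiv_C]
  · have h0 : (pderiv j f).IsHomogeneous 0 := by simpa using isHom_pderiv hf j
    rw [isHom_zero_eq_C h0]
    simp [pderiv_C]

lemma lapPow_isHom {n p m : ℕ} {f : MvPolynomial (Fin n) ℂ} (hf : f.IsHomogeneous m) :
    (((lapP n) ^ p) f).IsHomogeneous (m - 2 * p) := by
  induction p generalizing f m with
  | zero => simpa using hf
  | succ p ih =>
    rw [pow_succ, Module.End.mul_apply]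
    have := ih (isHom_lap hf)
    rwa [show m - 2 - 2 * p = m - 2 * (p + 1) by omega] at this

lemma lapPow_eq_zero {n p m : ℕ} {f : MvPolynomial (Fin n) ℂ} (hf : f.IsHomogeneous m)
    (h : m < 2 * p) : ((lapP n) ^ p) f = 0 := by
  induction p generalizing f m with
  | zero => omega
  | succ p ih =>
    rw [pow_succ, Module.End.mul_apply]
    rcases Nat.eq_zero_or_pos p with rfl | hp
    · rw [lap_eq_zero hf (by omega)]
      simp
    · exact ih (isHom_lap hf) (by omega)

lemma lap_monomial {n : ℕ} (d : Fin n →₀ ℕ) (c : ℂ) :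
    lapP n (monomial d c) = ∑ j : Fin n,
      monomial (d - Finsupp.single j 1 - Finsupp.single j 1)
        (c * ((d j * (d j - 1) : ℕ) : ℂ)) := by
  rw [lapP_apply]
  apply Finset.sum_congr rfl
  intro j _
  rw [pderiv_monomial, pderiv_monomial]
  congr 1
  rw [Finsupp.tsub_apply, Finsupp.single_eq_same, Nat.cast_mul]
  ring

lemma homog_le_map_lap (n m : ℕ) (hn : 0 < n) :
    homogeneousSubmodule (Fin n) ℂ m ≤
      Submodule.map (lapP n) (homogeneousSubmodule (Fin n) ℂ (m + 2)) := by
  set S := Submodule.map (lapP n) (homogeneousSubmodule (Fin n) ℂ (m + 2)) with hS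
  set j0 : Fin n := ⟨0, hn⟩ with hj0
  have compute : ∀ β : Fin n →₀ ℕ, β.degree = m →
      (∀ j : Fin n, j ≠ j0 → 2 ≤ β j →
        monomial (β + Finsupp.single j0 2 - Finsupp.single j 1 - Finsupp.single j 1)
          (1 : ℂ) ∈ S) →
      monomial β (1 : ℂ) ∈ S := by
    intro β hβ hcor
    set d : Fin n →₀ ℕ := β + Finsupp.single j0 2 with hd
    have hdeg : d.degree = m + 2 := by
      rw [hd, degree_fin_add, degree_fin_single, hβ]
    have humem : (monomial d (1 : ℂ)) ∈ homogeneousSubmodule (Fin n) ℂ (m + 2) :=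
      (mem_homogeneousSubmodule _ _).mpr (isHomogeneous_monomial _ hdeg)
    have hlap : lapP n (monomial d (1 : ℂ)) ∈ S := Submodule.mem_map_of_mem humem
    rw [lap_monomial, ← Finset.sum_erase_add _ _ (Finset.mem_univ j0)] at hlap
    have hdj0 : d j0 = β j0 + 2 := by
      simp [hd, Finsupp.add_apply, Finsupp.single_eq_same]
    have hdback : d - Finsupp.single j0 1 - Finsupp.single j0 1 = β := by
      ext i
      rcases eq_or_ne i j0 with rfl | hi
      · simp [hd, Finsupp.tsub_apply, Finsupp.add_apply, Finsupp.single_eq_same]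
      · simp [hd, Finsupp.tsub_apply, Finsupp.add_apply,
          Finsupp.single_apply, Ne.symm hi]
    have hrest : ∑ j ∈ Finset.univ.erase j0,
        monomial (d - Finsupp.single j 1 - Finsupp.single j 1)
          ((1 : ℂ) * ((d j * (d j - 1) : ℕ) : ℂ)) ∈ S := by
      apply Submodule.sum_mem
      intro j hj
      have hjne : j ≠ j0 := Finset.ne_of_mem_erase hj
      have hdj : d j = β j := by
        simp [hd, Finsupp.add_apply, Finsupp.single_apply, Ne.symm hjne]
      rcases Nat.lt_or_ge (β j) 2 with hb | hb
      · have hz : d j * (d j - 1) = 0 := by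
          rw [hdj]
          rcases (by omega : β j = 0 ∨ β j = 1) with h | h <;> simp [h]
        rw [hz]
        simp
      · have h1 := hcor j hjne hb
        have heq : monomial (d - Finsupp.single j 1 - Finsupp.single j 1)
              ((1 : ℂ) * ((d j * (d j - 1) : ℕ) : ℂ))
            = ((d j * (d j - 1) : ℕ) : ℂ) •
              monomial (β + Finsupp.single j0 2 - Finsupp.single j 1 - Finsupp.single j 1)
                (1 : ℂ) := by
          rw [smul_monomial, smul_eq_mul, mul_one, one_mul, ← hd]
        rw [heq]
        exact Submodule.smul_mem _ _ h1
    have hmain : monomial β ((((β j0 + 2) * (β j0 + 1) : ℕ)) : ℂ) ∈ S := by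
      have hsub := Submodule.sub_mem S hlap hrest
      rw [add_sub_cancel_left] at hsub
      have hcoe : d j0 * (d j0 - 1) = (β j0 + 2) * (β j0 + 1) := by
        rw [hdj0]; congr 1
      rwa [hdback, hcoe, one_mul] at hsub
    have hc : ((((β j0 + 2) * (β j0 + 1) : ℕ)) : ℂ) ≠ 0 := by
      exact Nat.cast_ne_zero.mpr (by positivity)
    have hsmul := Submodule.smul_mem S (((((β j0 + 2) * (β j0 + 1) : ℕ)) : ℂ))⁻¹ hmain
    rwa [smul_monomial, smul_eq_mul, inv_mul_cancel₀ hc] at hsmul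
  have key : ∀ t : ℕ, ∀ β : Fin n →₀ ℕ, β.degree = m → m ≤ β j0 + t →
      monomial β (1 : ℂ) ∈ S := by
    intro t
    induction t with
    | zero =>
      intro β hβ hb
      apply compute β hβ
      intro j hj h2
      exfalso
      have hle : β j0 + β j ≤ β.degree := by
        rw [degree_fin]
        have h := Finset.sum_le_sum_of_subset
          (Finset.subset_univ ({j0, j} : Finset (Fin n))) (f := fun i => β i)
        rwa [Finset.sum_pair (fun h' => hj h'.symm)] at h
      omega
    | succ t ih =>
      intro β hβ hb
      apply compute β hβ
      intro j hj h2
      set γ := β + Finsupp.single j0 2 - Finsupp.single j 1 - Finsupp.single j 1 with hγ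
      have hdj : (β + Finsupp.single j0 2 : Fin n →₀ ℕ) j = β j := by
        simp [Finsupp.add_apply, Finsupp.single_apply, Ne.symm hj]
      have hle1 : Finsupp.single j 1 ≤ β + Finsupp.single j0 2 :=
        Finsupp.single_le_iff.mpr (by rw [hdj]; omega)
      have hle2 : Finsupp.single j 1 ≤ β + Finsupp.single j0 2 - Finsupp.single j 1 := by
        apply Finsupp.single_le_iff.mpr
        rw [Finsupp.tsub_apply, Finsupp.single_eq_same, hdj]
        omega
      have hback : γ + Finsupp.single j 1 + Finsupp.single j 1 = β + Finsupp.single j0 2 := by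
        rw [hγ, tsub_add_cancel_of_le hle2, tsub_add_cancel_of_le hle1]
      have hγdeg : γ.degree = m := by
        have := congrArg Finsupp.degree hback
        rw [degree_fin_add, degree_fin_add, degree_fin_single, degree_fin_add,
          degree_fin_single, hβ] at this
        omega
      have hγj0 : γ j0 = β j0 + 2 := by
        rw [hγ]
        rw [Finsupp.tsub_apply, Finsupp.tsub_apply, Finsupp.add_apply,
          Finsupp.single_eq_same]
        rw [Finsupp.single_apply, if_neg hj]
        omega
      exact ih γ hγdeg (by omega)
  intro f hf
  rw [f.as_sum]
  apply Submodule.sum_mem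
  intro d hd
  have hdeg : d.degree = m := by
    by_contra h
    exact (MvPolynomial.mem_support_iff.mp hd)
      (((mem_homogeneousSubmodule _ _).mp hf).coeff_eq_zero h)
  have h1 := key m d hdeg (by omega)
  have h2 : monomial d (coeff d f) = (coeff d f) • monomial d (1 : ℂ) := by
    rw [smul_monomial, smul_eq_mul, mul_one]
  rw [h2]
  exact Submodule.smul_mem _ _ h1

lemma homog_le_map_lapPow (n : ℕ) (hn : 0 < n) (p m : ℕ) :
    homogeneousSubmodule (Fin n) ℂ m ≤
      Submodule.map ((lapP n) ^ p) (homogeneousSubmodule (Fin n) ℂ (m + 2 * p)) := by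
  induction p generalizing m with
  | zero =>
    intro x hx
    exact ⟨x, hx, rfl⟩
  | succ p ih =>
    calc homogeneousSubmodule (Fin n) ℂ m
        ≤ Submodule.map (lapP n) (homogeneousSubmodule (Fin n) ℂ (m + 2)) :=
          homog_le_map_lap n m hn
      _ ≤ Submodule.map (lapP n)
            (Submodule.map ((lapP n) ^ p) (homogeneousSubmodule (Fin n) ℂ (m + 2 + 2 * p))) :=
          Submodule.map_mono (ih (m + 2))
      _ = Submodule.map ((lapP n) ^ (p + 1)) (homogeneousSubmodule (Fin n) ℂ (m + 2 * (p + 1))) := by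
          rw [← Submodule.map_comp, ← Module.End.mul_eq_comp, ← pow_succ',
            show m + 2 + 2 * p = m + 2 * (p + 1) by omega]

lemma homog_fd (n m : ℕ) : FiniteDimensional ℂ (homogeneousSubmodule (Fin n) ℂ m) := by
  apply Submodule.finiteDimensional_of_le (S₂ := restrictTotalDegree (Fin n) ℂ m)
  intro f hf
  rw [mem_restrictTotalDegree]
  exact ((mem_homogeneousSubmodule _ _).mp hf).totalDegree_le

/-- equivalence between `Sym (Fin n) m` and degree-`m` exponents -/
def homEquivSym (n m : ℕ) :
    Sym (Fin n) m ≃ {d : Fin n →₀ ℕ // d ∈ {d : Fin n →₀ ℕ | d.degree = m}} where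
  toFun s := ⟨Multiset.toFinsupp s.1, by
    have : Finsupp.degree (Multiset.toFinsupp s.1) = Multiset.card s.1 :=
      Multiset.toFinsupp_sum_eq s.1
    simp only [Set.mem_setOf_eq, this, s.2]⟩
  invFun d := ⟨Finsupp.toMultiset d.1, by
    rw [Finsupp.card_toMultiset]
    exact d.2⟩
  left_inv s := Subtype.ext (Multiset.toFinsupp_toMultiset s.1)
  right_inv d := Subtype.ext (Finsupp.toMultiset_toFinsupp d.1)

lemma homog_finrank (n m : ℕ) (hn : 0 < n) :
    Module.finrank ℂ (homogeneousSubmodule (Fin n) ℂ m) = (n + m - 1).choose (n - 1) := by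
  classical
  letI : Fintype {d : Fin n →₀ ℕ // d ∈ {d : Fin n →₀ ℕ | Finsupp.degree d = m}} :=
    Fintype.ofEquiv _ (homEquivSym n m)
  have hb : Module.finrank ℂ (restrictSupport ℂ {d : Fin n →₀ ℕ | d.degree = m})
      = Fintype.card {d : Fin n →₀ ℕ // d ∈ {d : Fin n →₀ ℕ | Finsupp.degree d = m}} :=
    Module.finrank_eq_card_basis (basisRestrictSupport ℂ _)
  have hcard : Fintype.card {d : Fin n →₀ ℕ // d ∈ {d : Fin n →₀ ℕ | Finsupp.degree d = m}}
      = (n + m - 1).choose m := by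
    rw [← Fintype.card_congr (homEquivSym n m), Sym.card_sym_eq_choose, Fintype.card_fin]
  rw [homogeneousSubmodule_eq_finsupp_supported]
  rw [show (n + m - 1).choose (n - 1) = (n + m - 1).choose m by
    rw [show n - 1 = n + m - 1 - m by omega]
    exact Nat.choose_symm (by omega)]
  rw [← hcard]
  exact hb

end DimAux

/-- the dimension of `ℋ_m^p(ℂⁿ)`. -/
theorem dim_Hmp (n m p : ℕ) (hn : 0 < n) (hm : 0 < m) (hp : 0 < p) :
    Module.Finite ℂ (Hmp n m p) ∧
    (m < 2 * p → Module.finrank ℂ (Hmp n m p) = Nat.choose (n + m - 1) (n - 1)) ∧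
    (2 * p ≤ m → Module.finrank ℂ (Hmp n m p) =
      Nat.choose (n + m - 1) (n - 1) - Nat.choose (n + m - 2 * p - 1) (n - 1)) := by
  classical
  haveI hfdH : FiniteDimensional ℂ (MvPolynomial.homogeneousSubmodule (Fin n) ℂ m) :=
    homog_fd n m
  have hfin : FiniteDimensional ℂ (Hmp n m p) :=
    Submodule.finiteDimensional_of_le (S₂ := MvPolynomial.homogeneousSubmodule (Fin n) ℂ m)
      inf_le_left
  refine ⟨hfin, ?_, ?_⟩
  · intro hlt
    have hsub : MvPolynomial.homogeneousSubmodule (Fin n) ℂ m ≤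
        LinearMap.ker ((lapP n) ^ p) := by
      intro f hf
      rw [LinearMap.mem_ker]
      exact lapPow_eq_zero ((MvPolynomial.mem_homogeneousSubmodule _ _).mp hf) hlt
    have heq : Hmp n m p = MvPolynomial.homogeneousSubmodule (Fin n) ℂ m := by
      rw [Hmp]
      exact inf_eq_left.mpr hsub
    rw [heq]
    exact homog_finrank n m hn
  · intro hge
    have hmaps : ∀ x ∈ MvPolynomial.homogeneousSubmodule (Fin n) ℂ m,
        ((lapP n) ^ p) x ∈ MvPolynomial.homogeneousSubmodule (Fin n) ℂ (m - 2 * p) := by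
      intro x hx
      exact (MvPolynomial.mem_homogeneousSubmodule _ _).mpr
        (lapPow_isHom ((MvPolynomial.mem_homogeneousSubmodule _ _).mp hx))
    set L : (MvPolynomial.homogeneousSubmodule (Fin n) ℂ m) →ₗ[ℂ]
        (MvPolynomial.homogeneousSubmodule (Fin n) ℂ (m - 2 * p)) :=
      ((lapP n) ^ p).restrict hmaps with hL
    have hsurj : Function.Surjective L := by
      rintro ⟨y, hy⟩
      have hmem : y ∈ Submodule.map ((lapP n) ^ p)
          (MvPolynomial.homogeneousSubmodule (Fin n) ℂ m) := by
        have := homog_le_map_lapPow n hn p (m - 2 * p) hy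
        rwa [show m - 2 * p + 2 * p = m by omega] at this
      obtain ⟨x, hx, hxy⟩ := hmem
      exact ⟨⟨x, hx⟩, Subtype.ext hxy⟩
    have h1 : Module.finrank ℂ (LinearMap.range L)
        = Module.finrank ℂ (MvPolynomial.homogeneousSubmodule (Fin n) ℂ (m - 2 * p)) := by
      rw [LinearMap.range_eq_top.mpr hsurj]
      exact finrank_top ℂ _
    have h2 : Module.finrank ℂ (LinearMap.ker L) = Module.finrank ℂ (Hmp n m p) := by
      have hker : LinearMap.ker L =
          Submodule.comap (MvPolynomial.homogeneousSubmodule (Fin n) ℂ m).subtype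
            (Hmp n m p) := by
        rw [hL, LinearMap.ker_restrict hmaps, Hmp, Submodule.comap_inf,
          Submodule.comap_subtype_self, top_inf_eq]
      rw [hker]
      exact LinearEquiv.finrank_eq (Submodule.comapSubtypeEquivOfLe inf_le_left)
    have h3 := LinearMap.finrank_range_add_finrank_ker L
    rw [homog_finrank n m hn] at h3
    rw [homog_finrank n (m - 2 * p) hn] at h1
    rw [show n + m - 2 * p - 1 = n + (m - 2 * p) - 1 by omega]
    have hchoose_le : (n + (m - 2 * p) - 1).choose (n - 1) ≤ (n + m - 1).choose (n - 1) :=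
      Nat.choose_le_choose _ (by omega)
    omega

end
end
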